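/- arXiv:1509.08525 — 3 statements merged into one kernel-verified Lean document; each statement's English description precedes it below -/
import Mathlib

section
/- Let s(λ) be a 2×2 unitary matrix of the form s_{ab} = δ_{ab} + 2i G √(m_a m_b) for nonnegative reals m_l, m_r and a complex number G. Then |s_{ll}|² = 1 - 4 m_l m_r |G|², so s is off-diagonal (|s_{ll}| = 0) iff 4 m_l m_r |G|² = 1. -/
open Complex

/-- Let `s` be the 2×2 matrix with entries `s a b = δ_{ab} + 2i G √(m a · m b)`, where
`m 0 = ml ≥ 0`, `m 1 = mr ≥ 0` and `G ∈ ℂ`, and assume `s` is unitary.  Then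
`|s_{ll}|² = 1 - 4 ml mr |G|²`; in particular `s` is off-diagonal (`|s_{ll}| = 0`)
iff `4 ml mr |G|² = 1`. -/
theorem scattering_diag_abs_sq
    (ml mr : ℝ) (hml : 0 ≤ ml) (hmr : 0 ≤ mr) (G : ℂ)
    (s : Matrix (Fin 2) (Fin 2) ℂ)
    (hs_def : ∀ a b : Fin 2,
      s a b = (if a = b then 1 else 0) +
        2 * Complex.I * G * (Real.sqrt ((![ml, mr] a) * (![ml, mr] b)) : ℝ))
    (hs : s ∈ Matrix.unitaryGroup (Fin 2) ℂ) :
    ‖s 0 0‖ ^ 2 = 1 - 4 * ml * mr * ‖G‖ ^ 2 ∧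
      (‖s 0 0‖ = 0 ↔ 4 * ml * mr * ‖G‖ ^ 2 = 1) := by
  have hmul : s * star s = 1 := (Matrix.mem_unitaryGroup_iff).mp hs
  have h00 : (s * star s) 0 0 = (1 : Matrix (Fin 2) (Fin 2) ℂ) 0 0 := by rw [hmul]
  rw [Matrix.mul_apply, Fin.sum_univ_two] at h00
  simp only [Matrix.star_apply, Matrix.one_apply_eq] at h00
  have habs : (‖s 0 0‖ ^ 2 : ℂ) + (‖s 0 1‖ ^ 2 : ℂ) = 1 := by
    simp only [Complex.star_def, Complex.mul_conj] at h00
    rw [← Complex.sq_norm, ← Complex.sq_norm] at h00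
    exact_mod_cast h00
  have habsR : ‖s 0 0‖ ^ 2 + ‖s 0 1‖ ^ 2 = 1 := by
    exact_mod_cast habs
  have h01 : ‖s 0 1‖ ^ 2 = 4 * ml * mr * ‖G‖ ^ 2 := by
    have := hs_def 0 1
    simp only [Matrix.cons_val_zero, Matrix.cons_val_one, Matrix.head_cons] at this
    rw [this]
    have h0 : ((0 : Fin 2) = 1) = False := by simp
    simp only [h0, if_false, zero_add]
    rw [norm_mul, norm_mul, norm_mul]
    simp only [Complex.norm_two, Complex.norm_I, Complex.norm_real, Real.norm_eq_abs]
    rw [_root_.abs_of_nonneg (Real.sqrt_nonneg _)]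
    rw [mul_pow, mul_pow, mul_pow, Real.sq_sqrt (mul_nonneg hml hmr)]
    ring
  have hmain : ‖s 0 0‖ ^ 2 = 1 - 4 * ml * mr * ‖G‖ ^ 2 := by
    rw [← h01]; linarith
  refine ⟨hmain, ?_⟩
  constructor
  · intro h; rw [h] at hmain; nlinarith
  · intro h; rw [h] at hmain
    have := pow_eq_zero_iff (n := 2) (by norm_num) |>.mp (by linarith : ‖s 0 0‖ ^ 2 = 0)
    exact this
end

section
/- Suppose the 2×2 matrix with entries s_{ab} = δ_{ab} + 2iG√(m_a m_b), where m_l, m_r > 0 and G ∈ ℂ, is unitary. Then Im G = |G|²(m_l + m_r). -/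
open Complex

/-- If the 2×2 matrix with entries `s a b = δ_{ab} + 2i G √(m a · m b)`, where
`m 0 = ml > 0`, `m 1 = mr > 0` and `G ∈ ℂ`, is unitary, then
`Im G = |G|² (ml + mr)`. -/
theorem scattering_unitarity_imG
    (ml mr : ℝ) (hml : 0 < ml) (hmr : 0 < mr) (G : ℂ)
    (s : Matrix (Fin 2) (Fin 2) ℂ)
    (hs_def : ∀ a b : Fin 2,
      s a b = (if a = b then 1 else 0) +
        2 * Complex.I * G * (Real.sqrt ((![ml, mr] a) * (![ml, mr] b)) : ℝ))
    (hs : s ∈ Matrix.unitaryGroup (Fin 2) ℂ) :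
    G.im = ‖G‖ ^ 2 * (ml + mr) := by
  have hA : s * star s = 1 := (Matrix.mem_unitaryGroup_iff).mp hs
  have h00 : (s * star s) 0 0 = (1 : Matrix (Fin 2) (Fin 2) ℂ) 0 0 := by rw [hA]
  rw [Matrix.mul_apply, Fin.sum_univ_two] at h00
  simp only [Matrix.star_apply, Matrix.one_apply_eq] at h00
  rw [hs_def 0 0, hs_def 0 1] at h00
  have hml0 : Real.sqrt (![ml, mr] 0 * (![ml, mr] 0)) = ml := by
    simp [Real.sqrt_mul_self hml.le]
  have hsq : Real.sqrt (![ml, mr] 0 * (![ml, mr] 1)) ^ 2 = ml * mr := by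
    simp [Real.sq_sqrt (by positivity : (0:ℝ) ≤ ml * mr)]
  set t : ℝ := Real.sqrt (![ml, mr] 0 * (![ml, mr] 1)) with ht
  rw [hml0] at h00
  have habs : ‖G‖ ^ 2 = G.re ^ 2 + G.im ^ 2 := by
    rw [Complex.sq_norm, Complex.normSq_apply]; ring
  rw [habs]
  have h := congrArg Complex.re h00
  simp [Complex.ext_iff, Complex.add_re, Complex.mul_re, Complex.mul_im,
    Complex.conj_re, Complex.conj_im] at h
  nlinarith [hsq, sq_nonneg G.re, sq_nonneg G.im, hml.le, hmr.le]
end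

section
/- Let h : ℝ → ℂ be a bounded continuously differentiable function such that lim_{t→∞} h(t) = L₊ and lim_{t→-∞} h(t) = L₋ exist, and h' is bounded. Then lim_{ε↓0} ∫_ℝ e^{-ε|t|} h'(t) dt = L₊ - L₋. -/
open MeasureTheory Filter Set



lemma integrableOn_exp_mul_Iic' {b : ℝ} (hb : 0 < b) :
    IntegrableOn (fun x => Real.exp (b*x)) (Iic (0:ℝ)) := by
  have h1 : Integrable ((Ioi (0:ℝ)).indicator (fun x => Real.exp (-b*x))) :=
    (integrable_indicator_iff measurableSet_Ioi).mpr (exp_neg_integrableOn_Ioi 0 hb)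
  have h2 := h1.comp_neg
  have h3 : (fun x => (Ioi (0:ℝ)).indicator (fun x => Real.exp (-b*x)) (-x))
      = (Iio (0:ℝ)).indicator (fun x => Real.exp (b*x)) := by
    funext x
    by_cases hx : x < 0 <;>
      simp [Set.indicator, hx, not_lt.mpr, neg_pos, neg_mul, mul_neg, le_of_not_gt]
  rw [h3, integrable_indicator_iff measurableSet_Iio] at h2
  exact h2.congr_set_ae Iio_ae_eq_Iic.symm

lemma abel_key (h : ℝ → ℂ) (hc : Continuous h) (M : ℝ) (hM : ∀ t, ‖h t‖ ≤ M)
    (L : ℂ) (hL : Tendsto h atTop (nhds L)) :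
    Tendsto (fun ε : ℝ => ε • ∫ t in Ioi (0:ℝ), Real.exp (-ε * t) • h t)
      (nhdsWithin 0 (Ioi 0)) (nhds L) := by
  have heq : ∀ᶠ ε in nhdsWithin (0:ℝ) (Ioi 0),
      (∫ u in Ioi (0:ℝ), Real.exp (-u) • h (u / ε))
        = ε • ∫ t in Ioi (0:ℝ), Real.exp (-ε * t) • h t := by
    filter_upwards [self_mem_nhdsWithin] with ε (hε : (0:ℝ) < ε)
    have h1 := integral_comp_mul_left_Ioi (fun u => Real.exp (-u) • h (u / ε)) 0 hε
    simp only [mul_zero, mul_div_cancel_left₀ _ hε.ne', ← neg_mul] at h1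
    rw [h1, smul_smul, mul_inv_cancel₀ hε.ne', one_smul]
  have hlim : Tendsto (fun ε : ℝ => ∫ u in Ioi (0:ℝ), Real.exp (-u) • h (u / ε))
      (nhdsWithin 0 (Ioi 0)) (nhds L) := by
    have hL' : (∫ u in Ioi (0:ℝ), Real.exp (-u) • L) = L := by
      rw [integral_smul_const, integral_exp_neg_Ioi_zero, one_smul]
    rw [← hL']
    apply tendsto_integral_filter_of_dominated_convergence
      (fun u => M * Real.exp (-u))
    · filter_upwards [self_mem_nhdsWithin] with ε (hε : (0:ℝ) < ε)
      exact ((Real.continuous_exp.comp continuous_neg).smul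
        (hc.comp (continuous_id.div_const ε))).aestronglyMeasurable
    · filter_upwards [self_mem_nhdsWithin] with ε _
      filter_upwards [] with u
      rw [norm_smul, Real.norm_eq_abs, abs_of_pos (Real.exp_pos _), mul_comm]
      exact mul_le_mul_of_nonneg_right (hM _) (Real.exp_pos _).le
    · exact ((exp_neg_integrableOn_Ioi 0 one_pos).congr_fun
        (fun x _ => by simp) measurableSet_Ioi).const_mul M
    · filter_upwards [ae_restrict_mem measurableSet_Ioi] with u (hu : (0:ℝ) < u)
      have hdiv : Tendsto (fun ε : ℝ => u / ε) (nhdsWithin 0 (Ioi 0)) atTop := by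
        simp_rw [div_eq_mul_inv]
        exact Tendsto.const_mul_atTop hu tendsto_inv_nhdsGT_zero
      exact tendsto_const_nhds.smul (hL.comp hdiv)
  exact hlim.congr' heq


lemma abel_half (h : ℝ → ℂ) (hh : ContDiff ℝ 1 h) (M M' : ℝ)
    (hM : ∀ t, ‖h t‖ ≤ M) (hM' : ∀ t, ‖deriv h t‖ ≤ M')
    (L : ℂ) (hL : Tendsto h atTop (nhds L)) :
    Tendsto (fun ε : ℝ => ∫ t in Ioi (0:ℝ), Real.exp (-ε * t) • deriv h t)
      (nhdsWithin 0 (Ioi 0)) (nhds (L - h 0)) := by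
  have hc : Continuous h := hh.continuous
  have hc' : Continuous (deriv h) := hh.continuous_deriv le_rfl
  have heq : ∀ᶠ ε in nhdsWithin (0:ℝ) (Ioi 0),
      (ε • ∫ t in Ioi (0:ℝ), Real.exp (-ε * t) • h t) - h 0
        = ∫ t in Ioi (0:ℝ), Real.exp (-ε * t) • deriv h t := by
    filter_upwards [self_mem_nhdsWithin] with ε (hε : (0:ℝ) < ε)
    have hexp : Continuous (fun t : ℝ => Real.exp (-ε * t)) :=
      Real.continuous_exp.comp (continuous_const.mul continuous_id)
    have hexpint : IntegrableOn (fun t : ℝ => Real.exp (-ε * t)) (Ioi 0) :=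
      exp_neg_integrableOn_Ioi 0 hε
    have intA : IntegrableOn (fun t : ℝ => Real.exp (-ε * t) • deriv h t) (Ioi 0) := by
      refine Integrable.mono' (hexpint.const_mul M') ((hexp.smul hc').aestronglyMeasurable.restrict) ?_
      filter_upwards [] with t
      rw [norm_smul, Real.norm_eq_abs, abs_of_pos (Real.exp_pos _), mul_comm]
      exact mul_le_mul_of_nonneg_right (hM' _) (Real.exp_pos _).le
    have intB : IntegrableOn (fun t : ℝ => Real.exp (-ε * t) • h t) (Ioi 0) := by
      refine Integrable.mono' (hexpint.const_mul M) ((hexp.smul hc).aestronglyMeasurable.restrict) ?_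
      filter_upwards [] with t
      rw [norm_smul, Real.norm_eq_abs, abs_of_pos (Real.exp_pos _), mul_comm]
      exact mul_le_mul_of_nonneg_right (hM _) (Real.exp_pos _).le
    have intB' : IntegrableOn (fun t : ℝ => (Real.exp (-ε * t) * (-ε)) • h t) (Ioi 0) := by
      refine (intB.smul (-ε)).congr (Eventually.of_forall fun t => ?_)
      simp [smul_smul, mul_comm]; ring
    have hder : ∀ x ∈ Ioi (0:ℝ), HasDerivAt (fun t => Real.exp (-ε * t) • h t)
        (Real.exp (-ε * x) • deriv h x + (Real.exp (-ε * x) * (-ε)) • h x) x := by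
      intro x _
      have := (((hasDerivAt_id x).const_mul (-ε)).exp).smul
        (hh.differentiable one_ne_zero x).hasDerivAt
      have e : ∀ (f : ℝ → ℝ) (g : ℝ → ℂ), f • g = fun t => f t • g t := fun _ _ => rfl
      simpa [e] using this
    have htend : Tendsto (fun t : ℝ => Real.exp (-ε * t) • h t) atTop (nhds 0) := by
      have h2 : Tendsto (fun t : ℝ => ε * t) atTop atTop :=
        Tendsto.const_mul_atTop hε tendsto_id
      have h1 : Tendsto (fun t : ℝ => Real.exp (-ε * t)) atTop (nhds 0) :=
        (Real.tendsto_exp_neg_atTop_nhds_zero.comp h2).congr (fun t => by simp [neg_mul])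
      simpa using h1.smul hL
    have hFTC := integral_Ioi_of_hasDerivAt_of_tendsto
      ((hexp.smul hc).continuousWithinAt) hder (intA.add intB') htend
    rw [integral_add intA intB'] at hFTC
    have e1 : (∫ t in Ioi (0:ℝ), (Real.exp (-ε * t) * (-ε)) • h t)
        = (-ε) • ∫ t in Ioi (0:ℝ), Real.exp (-ε * t) • h t := by
      rw [← integral_smul]
      congr 1; funext t; simp [smul_smul, mul_comm]; ring
    rw [e1, neg_smul] at hFTC
    have e2 : Real.exp (-ε * 0) • h 0 = h 0 := by simp
    simp only [Pi.smul_apply'] at hFTC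
    rw [e2, zero_sub] at hFTC
    linear_combination -hFTC
  exact ((abel_key h hc M hM L hL).sub_const (h 0)).congr' heq

/-- Abelian theorem: if `h : ℝ → ℂ` is `C¹` with `h` and `h'` bounded and
`h(t) → L₊` as `t → ∞`, `h(t) → L₋` as `t → -∞`, then
`∫ℝ e^{-ε|t|} h'(t) dt → L₊ - L₋` as `ε ↓ 0`. -/
theorem abel_limit_derivative
    (h : ℝ → ℂ) (hh : ContDiff ℝ 1 h)
    (hb : ∃ M : ℝ, ∀ t : ℝ, ‖h t‖ ≤ M)
    (hb' : ∃ M' : ℝ, ∀ t : ℝ, ‖deriv h t‖ ≤ M')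
    (Lp Lm : ℂ)
    (hLp : Tendsto h atTop (nhds Lp)) (hLm : Tendsto h atBot (nhds Lm)) :
    Tendsto (fun ε : ℝ => ∫ t : ℝ, Real.exp (-ε * |t|) • deriv h t)
      (nhdsWithin 0 (Set.Ioi 0)) (nhds (Lp - Lm)) := by
  obtain ⟨M, hM⟩ := hb
  obtain ⟨M', hM'⟩ := hb'
  have hc' : Continuous (deriv h) := hh.continuous_deriv le_rfl
  set H : ℝ → ℂ := fun t => h (-t) with hHdef
  have hH : ContDiff ℝ 1 H := hh.comp contDiff_neg
  have hderH : ∀ t : ℝ, deriv H t = -(deriv h (-t)) := by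
    intro t
    have h1 : HasDerivAt H ((-1 : ℝ) • deriv h (-t)) t := by
      exact HasDerivAt.scomp t (hh.differentiable one_ne_zero (-t)).hasDerivAt (hasDerivAt_neg t)
    simpa using h1.deriv
  have hHM : ∀ t, ‖H t‖ ≤ M := fun t => hM (-t)
  have hHM' : ∀ t, ‖deriv H t‖ ≤ M' := by
    intro t; rw [hderH t, norm_neg]; exact hM' (-t)
  have hHL : Tendsto H atTop (nhds Lm) := hLm.comp tendsto_neg_atTop_atBot
  have A := abel_half h hh M M' hM hM' Lp hLp
  have B := abel_half H hH M M' hHM hHM' Lm hHL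
  have H0 : H 0 = h 0 := by simp [hHdef]
  rw [H0] at B
  have C := A.sub B
  have : (Lp - h 0) - (Lm - h 0) = Lp - Lm := by ring
  rw [this] at C
  refine C.congr' ?_
  filter_upwards [self_mem_nhdsWithin] with ε (hε : (0:ℝ) < ε)
  -- equality of the two expressions for fixed ε > 0
  have hexpabs : Continuous (fun t : ℝ => Real.exp (-ε * |t|)) :=
    Real.continuous_exp.comp (continuous_const.mul continuous_abs)
  have gIoi : IntegrableOn (fun t : ℝ => Real.exp (-ε * |t|) • deriv h t) (Ioi 0) := by
    refine Integrable.mono' ((exp_neg_integrableOn_Ioi 0 hε).const_mul M')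
      ((hexpabs.smul hc').aestronglyMeasurable.restrict) ?_
    filter_upwards [ae_restrict_mem measurableSet_Ioi] with t (ht : (0:ℝ) < t)
    rw [norm_smul, Real.norm_eq_abs, abs_of_pos (Real.exp_pos _), abs_of_pos ht, mul_comm]
    exact mul_le_mul_of_nonneg_right (hM' _) (Real.exp_pos _).le
  have gIic : IntegrableOn (fun t : ℝ => Real.exp (-ε * |t|) • deriv h t) (Iic 0) := by
    refine Integrable.mono' ((integrableOn_exp_mul_Iic' hε).const_mul M')
      ((hexpabs.smul hc').aestronglyMeasurable.restrict) ?_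
    filter_upwards [ae_restrict_mem measurableSet_Iic] with t (ht : t ≤ (0:ℝ))
    rw [norm_smul, Real.norm_eq_abs, abs_of_pos (Real.exp_pos _), abs_of_nonpos ht, neg_mul_neg, mul_comm]
    exact mul_le_mul_of_nonneg_right (hM' _) (Real.exp_pos _).le
  rw [← intervalIntegral.integral_Iic_add_Ioi gIic gIoi]
  have eIoi : (∫ t in Ioi (0:ℝ), Real.exp (-ε * |t|) • deriv h t)
      = ∫ t in Ioi (0:ℝ), Real.exp (-ε * t) • deriv h t := by
    refine setIntegral_congr_fun measurableSet_Ioi (fun t ht => ?_)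
    rw [abs_of_pos ht]
  have eIic : (∫ t in Iic (0:ℝ), Real.exp (-ε * |t|) • deriv h t)
      = -∫ t in Ioi (0:ℝ), Real.exp (-ε * t) • deriv H t := by
    have e1 : (∫ t in Iic (0:ℝ), Real.exp (-ε * |t|) • deriv h t)
        = ∫ t in Iic (0:ℝ), Real.exp (-ε * (-t)) • deriv h t := by
      refine setIntegral_congr_fun measurableSet_Iic (fun t ht => ?_)
      rw [abs_of_nonpos ht]
    have e2 := integral_comp_neg_Iic (0:ℝ) (fun s => Real.exp (-ε * s) • deriv h (-s))
    simp only [neg_neg, neg_zero] at e2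
    have e3 : (∫ t in Ioi (0:ℝ), Real.exp (-ε * t) • deriv H t)
        = ∫ s in Ioi (0:ℝ), -(Real.exp (-ε * s) • deriv h (-s)) := by
      refine setIntegral_congr_fun measurableSet_Ioi (fun s _ => ?_)
      rw [hderH s, smul_neg]
    rw [e1, e3, integral_neg, neg_neg, ← e2]
  rw [eIoi, eIic]
  ring
end
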